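/- Volume of a 4-parallelotope from the Gram matrix of its volume normals: let a, b, c, d be a basis of ℝ⁴ and M the 4×4 matrix with columns a, b, c, d. For each i ∈ {1,2,3,4} let ℓᵢ ∈ ℝ⁴ be the (unique) vector such that η(ℓᵢ, v) = det(Mᵢ(v)) for all v ∈ ℝ⁴, where Mᵢ(v) is M with its i-th column replaced by v. Let L be the 4×4 matrix with entries L_{ij} = η(ℓᵢ, ℓⱼ). Then det L = −(det M)⁶; in particular the spacetime volume Ω = |det M| of the parallelotope spanned by a, b, c, d satisfies Ω = |det L|^{1/6}. -/

import Mathlib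

/-- The Minkowski bilinear form on `ℝ⁴` with signature `(-,+,+,+)`. -/
def eta (x y : Fin 4 → ℝ) : ℝ :=
  -(x 0 * y 0) + x 1 * y 1 + x 2 * y 2 + x 3 * y 3

/-- The 4×4 matrix whose columns are the vectors `e 0, e 1, e 2, e 3`. -/
def cols (e : Fin 4 → Fin 4 → ℝ) : Matrix (Fin 4) (Fin 4) ℝ :=
  Matrix.of fun i j => e j i

/-- Volume of a 4-parallelotope from the Gram matrix of its volume normals:
if `ℓ i` are the volume normals of the hyperfaces of the parallelotope spanned
by the basis `a, b, c, d` (i.e. `η(ℓᵢ, v) = det(M with i-th column replaced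
by v)`), and `L` is their Gram matrix, then `det L = -(det M)⁶`, so the volume
`Ω = |det M|` satisfies `Ω = |det L|^{1/6}`. -/
theorem parallelotope_volume_from_normals (a b c d : Fin 4 → ℝ)
    (hbasis : LinearIndependent ℝ ![a, b, c, d])
    (ℓ : Fin 4 → Fin 4 → ℝ)
    (hℓ : ∀ i v, eta (ℓ i) v = ((cols ![a, b, c, d]).updateCol i v).det) :
    (Matrix.of fun i j => eta (ℓ i) (ℓ j)).det = -((cols ![a, b, c, d]).det ^ 6) ∧
    |(cols ![a, b, c, d]).det| =
      |(Matrix.of fun i j => eta (ℓ i) (ℓ j)).det| ^ ((1 : ℝ) / 6) := by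
  set M := cols ![a, b, c, d] with hM
  set N : Matrix (Fin 4) (Fin 4) ℝ :=
    Matrix.of fun i k => (M.updateCol i (Pi.single k 1)).det with hN
  have hcomp : ∀ i, ℓ i 0 = -N i 0 ∧ ℓ i 1 = N i 1 ∧ ℓ i 2 = N i 2 ∧ ℓ i 3 = N i 3 := by
    intro i
    have h0 := hℓ i (Pi.single 0 1)
    have h1 := hℓ i (Pi.single 1 1)
    have h2 := hℓ i (Pi.single 2 1)
    have h3 := hℓ i (Pi.single 3 1)
    simp +decide [eta, Pi.single_apply] at h0 h1 h2 h3
    refine ⟨?_, ?_, ?_, ?_⟩ <;> simp [hN] <;> linarith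
  have hL : (Matrix.of fun i j => eta (ℓ i) (ℓ j))
      = N * (Matrix.diagonal ![-1, 1, 1, 1]) * N.transpose := by
    ext i j
    obtain ⟨hi0, hi1, hi2, hi3⟩ := hcomp i
    obtain ⟨hj0, hj1, hj2, hj3⟩ := hcomp j
    simp [eta, Matrix.mul_apply, Matrix.diagonal_apply, Fin.sum_univ_four,
      hi0, hi1, hi2, hi3, hj0, hj1, hj2, hj3]
    try ring
  have hNdet : N.det = M.det ^ 3 := by
    have hNT : N = (Matrix.adjugate M.transpose).transpose := by
      ext i k
      have h : M.updateCol i (Pi.single k 1)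
          = (M.transpose.updateRow i (Pi.single k 1)).transpose := by
        rw [← Matrix.updateCol_transpose, Matrix.transpose_transpose]
      simp [hN, Matrix.adjugate_apply, h, Matrix.det_transpose]
    rw [hNT, Matrix.det_transpose, Matrix.det_adjugate, Matrix.det_transpose]
    norm_num
  have hdiag : (Matrix.diagonal ![-1, 1, 1, 1] : Matrix (Fin 4) (Fin 4) ℝ).det = -1 := by
    simp [Matrix.det_diagonal, Fin.prod_univ_four]
  have hLdet : (Matrix.of fun i j => eta (ℓ i) (ℓ j)).det = -(M.det ^ 6) := by
    rw [hL, Matrix.det_mul, Matrix.det_mul, Matrix.det_transpose, hNdet, hdiag]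
    ring
  refine ⟨hLdet, ?_⟩
  rw [hLdet, abs_neg, abs_pow]
  rw [← Real.rpow_natCast |M.det| 6, ← Real.rpow_mul (abs_nonneg _)]
  norm_num
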